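/- For every x ∈ ℝ^n, the maximum of xᵀAx + cᵀx over all pairs (c, A) ∈ 𝒰 × 𝒱 equals xᵀ(A_0 + ρ·I_n)x + max_{1 ≤ k ≤ q} (c_0ᵀx + Σ_{l=1}^L ξ_l^{(k)} c_lᵀx), and this maximum is attained. -/

import Mathlib

open Matrix RealInnerProductSpace

/-- For every x ∈ ℝ^n, the maximum of xᵀAx + cᵀx over (c, A) ∈ 𝒰 × 𝒱
equals xᵀ(A₀ + ρIₙ)x + max_{1≤k≤q}(c₀ᵀx + Σ_l ξ_l^{(k)} c_lᵀx), and it is attained.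
Here 𝒰 is the polyhedral uncertainty set generated by the scenarios ξ^{(k)} and 𝒱 is
the spectral-norm uncertainty set around A₀. -/
theorem stmt_12 (n L q : ℕ) (hq : 1 ≤ q) (ρ : ℝ) (hρ : 0 ≤ ρ)
    (c₀ : Fin n → ℝ) (cc : Fin L → Fin n → ℝ) (ξ : Fin q → Fin L → ℝ)
    (A₀ : Matrix (Fin n) (Fin n) ℝ) (hA₀ : A₀.IsSymm)
    (specNorm : Matrix (Fin n) (Fin n) ℝ → ℝ)
    (hspec : ∀ V : Matrix (Fin n) (Fin n) ℝ,
      specNorm V = ‖Matrix.toEuclideanCLM (𝕜 := ℝ) (n := Fin n) V‖)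
    (𝒰 : Set (Fin n → ℝ))
    (h𝒰 : 𝒰 = (fun z : Fin L → ℝ => c₀ + ∑ l, z l • cc l) ''
        convexHull ℝ (Set.range ξ))
    (𝒱 : Set (Matrix (Fin n) (Fin n) ℝ))
    (h𝒱 : 𝒱 = {M | ∃ V : Matrix (Fin n) (Fin n) ℝ,
        V.IsSymm ∧ specNorm V ≤ ρ ∧ M = A₀ + V})
    (x : Fin n → ℝ) :
    IsGreatest {t : ℝ | ∃ cv ∈ 𝒰, ∃ Av ∈ 𝒱, t = x ⬝ᵥ Av *ᵥ x + cv ⬝ᵥ x}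
      (x ⬝ᵥ (A₀ + ρ • (1 : Matrix (Fin n) (Fin n) ℝ)) *ᵥ x
        + (Finset.univ.sup' ⟨⟨0, hq⟩, Finset.mem_univ _⟩
            fun k => c₀ ⬝ᵥ x + ∑ l, ξ k l * (cc l ⬝ᵥ x))) := by
  have hne : (Finset.univ : Finset (Fin q)).Nonempty := ⟨⟨0, hq⟩, Finset.mem_univ _⟩
  set M : ℝ := Finset.univ.sup' hne fun k => c₀ ⬝ᵥ x + ∑ l, ξ k l * (cc l ⬝ᵥ x) with hM
  -- the dot product expansion
  have hdot : ∀ z : Fin L → ℝ,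
      (c₀ + ∑ l, z l • cc l) ⬝ᵥ x = c₀ ⬝ᵥ x + ∑ l, z l * (cc l ⬝ᵥ x) := by
    intro z
    simp only [dotProduct, Pi.add_apply, Finset.sum_apply, Pi.smul_apply,
      smul_eq_mul, add_mul, Finset.sum_add_distrib, Finset.sum_mul, mul_assoc,
      Finset.mul_sum]
    rw [Finset.sum_comm]
  -- the quadratic bound
  have hquad : ∀ V : Matrix (Fin n) (Fin n) ℝ, specNorm V ≤ ρ →
      x ⬝ᵥ V *ᵥ x ≤ x ⬝ᵥ (ρ • (1 : Matrix (Fin n) (Fin n) ℝ)) *ᵥ x := by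
    intro V hV
    set T := Matrix.toEuclideanCLM (𝕜 := ℝ) (n := Fin n) V with hT
    set y : EuclideanSpace ℝ (Fin n) := (WithLp.equiv 2 _).symm x with hy
    have h1 : x ⬝ᵥ V *ᵥ x = ⟪y, T y⟫ := by
      rw [hy, hT, WithLp.equiv_symm_apply, Matrix.toEuclideanCLM_toLp,
        EuclideanSpace.inner_toLp_toLp]
      simp [Matrix.toLin'_apply, dotProduct, mul_comm]
    have h2 : x ⬝ᵥ x = ‖y‖ ^ 2 := by
      have : (⟪y, y⟫) = x ⬝ᵥ x := by
        rw [hy, WithLp.equiv_symm_apply, EuclideanSpace.inner_toLp_toLp]; simp [dotProduct]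
      rw [← this, real_inner_self_eq_norm_sq]
    have h3 : x ⬝ᵥ (ρ • (1 : Matrix (Fin n) (Fin n) ℝ)) *ᵥ x = ρ * ‖y‖ ^ 2 := by
      rw [← h2]
      simp [Matrix.smul_mulVec, Matrix.one_mulVec, dotProduct_smul,
        smul_eq_mul]
    rw [h1, h3]
    calc ⟪y, T y⟫ ≤ ‖y‖ * ‖T y‖ := real_inner_le_norm y (T y)
      _ ≤ ‖y‖ * (‖T‖ * ‖y‖) := by
          apply mul_le_mul_of_nonneg_left (T.le_opNorm y) (norm_nonneg y)
      _ = ‖T‖ * ‖y‖ ^ 2 := by ring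
      _ ≤ ρ * ‖y‖ ^ 2 := by
          apply mul_le_mul_of_nonneg_right _ (sq_nonneg _)
          rw [hspec V] at hV; exact hV
  -- the linear bound on the convex hull
  have hlin : ∀ z ∈ convexHull ℝ (Set.range ξ),
      c₀ ⬝ᵥ x + ∑ l, z l * (cc l ⬝ᵥ x) ≤ M := by
    have hconv : Convex ℝ {z : Fin L → ℝ | c₀ ⬝ᵥ x + ∑ l, z l * (cc l ⬝ᵥ x) ≤ M} := by
      have : IsLinearMap ℝ (fun z : Fin L → ℝ => ∑ l, z l * (cc l ⬝ᵥ x)) := by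
        constructor
        · intro a b; simp [add_mul, Finset.sum_add_distrib]
        · intro r a; simp [Finset.mul_sum, mul_assoc]
      have := convex_halfSpace_le this (M - c₀ ⬝ᵥ x)
      convert this using 1
      · rfl
      ext z; simp [le_sub_iff_add_le']
    have hsub : Set.range ξ ⊆ {z : Fin L → ℝ | c₀ ⬝ᵥ x + ∑ l, z l * (cc l ⬝ᵥ x) ≤ M} := by
      rintro _ ⟨k, rfl⟩
      exact Finset.le_sup' (fun k => c₀ ⬝ᵥ x + ∑ l, ξ k l * (cc l ⬝ᵥ x))
        (Finset.mem_univ k)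
    intro z hz
    exact convexHull_min hsub hconv hz
  constructor
  · -- membership: attained at a vertex and at V = ρ • 1
    obtain ⟨k₀, -, hk₀⟩ := Finset.exists_mem_eq_sup' hne
      fun k => c₀ ⬝ᵥ x + ∑ l, ξ k l * (cc l ⬝ᵥ x)
    refine ⟨c₀ + ∑ l, ξ k₀ l • cc l, ?_, A₀ + ρ • 1, ?_, ?_⟩
    · rw [h𝒰]
      exact ⟨ξ k₀, subset_convexHull ℝ _ ⟨k₀, rfl⟩, rfl⟩
    · rw [h𝒱]
      refine ⟨ρ • 1, ?_, ?_, rfl⟩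
      · simp [Matrix.IsSymm, Matrix.transpose_smul]
      · rw [hspec]
        calc ‖Matrix.toEuclideanCLM (𝕜 := ℝ) (n := Fin n) (ρ • 1)‖
            = ‖ρ • (1 : EuclideanSpace ℝ (Fin n) →L[ℝ] EuclideanSpace ℝ (Fin n))‖ := by
              rw [_root_.map_smul, _root_.map_one]
          _ = |ρ| * ‖(1 : EuclideanSpace ℝ (Fin n) →L[ℝ] EuclideanSpace ℝ (Fin n))‖ := by
              rw [norm_smul ρ (1 : EuclideanSpace ℝ (Fin n) →L[ℝ] EuclideanSpace ℝ (Fin n)), Real.norm_eq_abs]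
          _ ≤ ρ * 1 := by
              apply mul_le_mul (le_of_eq (abs_of_nonneg hρ))
                ContinuousLinearMap.norm_id_le (norm_nonneg _) hρ
          _ = ρ := mul_one ρ
    · rw [hdot, ← hk₀]
  · -- upper bound
    rintro t ⟨cv, hcv, Av, hAv, rfl⟩
    rw [h𝒰] at hcv
    obtain ⟨z, hz, rfl⟩ := hcv
    rw [h𝒱] at hAv
    obtain ⟨V, -, hVρ, rfl⟩ := hAv
    have e1 : x ⬝ᵥ (A₀ + V) *ᵥ x = x ⬝ᵥ A₀ *ᵥ x + x ⬝ᵥ V *ᵥ x := by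
      rw [Matrix.add_mulVec, dotProduct_add]
    have e2 : x ⬝ᵥ (A₀ + ρ • (1 : Matrix (Fin n) (Fin n) ℝ)) *ᵥ x
        = x ⬝ᵥ A₀ *ᵥ x + x ⬝ᵥ (ρ • (1 : Matrix (Fin n) (Fin n) ℝ)) *ᵥ x := by
      rw [Matrix.add_mulVec, dotProduct_add]
    rw [e1, e2, hdot]
    have := hlin z hz
    have := hquad V hVρ
    linarith
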